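/- A pair of realization plans (Φ_A, Φ_D) is a Nash equilibrium of the sequence-form game if and only if there exist vectors p, q such that E^T p ≥ Π_A Φ_D, F^T q ≥ Π_D^T Φ_A, Φ_A^T(−Π_A Φ_D + E^T p) = 0, Φ_D^T(−Π_D^T Φ_A + F^T q) = 0, E Φ_A = e, F Φ_D = f, Φ_A ≥ 0, Φ_D ≥ 0. -/

import Mathlib

open Matrix Finset

lemma cone_cara {V : Type*} [AddCommGroup V] [Module ℝ V] {ι : Type*} [Fintype ι]
    (v : ι → V) (c : ι → ℝ) (hc : ∀ i, 0 ≤ c i) :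
    ∃ d : ι → ℝ, (∀ i, 0 ≤ d i) ∧ ∑ i, d i • v i = ∑ i, c i • v i ∧
      LinearIndependent ℝ (fun i : {i // d i ≠ 0} => v i) := by
  classical
  generalize hN : (Finset.univ.filter (fun i => c i ≠ 0)).card = N
  induction N using Nat.strong_induction_on generalizing c with
  | _ N ih =>
  by_cases hli : LinearIndependent ℝ (fun i : {i // c i ≠ 0} => v i)
  · exact ⟨c, hc, rfl, hli⟩
  · obtain ⟨g, hgsum, j₀, hj₀⟩ := Fintype.not_linearIndependent_iff.mp hli
    set w : ι → ℝ := fun i => if h : c i ≠ 0 then g ⟨i, h⟩ else 0 with hw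
    have hwc : ∀ i, c i = 0 → w i = 0 := by intro i h; simp [hw, h]
    have hwsum : ∑ i, w i • v i = 0 := by
      have h1 : ∑ i ∈ Finset.univ.filter (fun i => c i ≠ 0), w i • v i = ∑ i, w i • v i :=
        Finset.sum_filter_of_ne (by
          intro i _ hne
          by_contra h
          exact hne (by rw [hwc i h, zero_smul]))
      have h2 : ∑ i ∈ Finset.univ.filter (fun i => c i ≠ 0), w i • v i
          = ∑ x : {i // c i ≠ 0}, w x • v x :=
        Finset.sum_subtype _ (by simp) _
      have h3 : ∑ x : {i // c i ≠ 0}, w x • v x = ∑ x : {i // c i ≠ 0}, g x • v x := by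
        refine Finset.sum_congr rfl fun x _ => ?_
        simp [hw, x.2]
      rw [← h1, h2, h3, hgsum]
    -- WLOG there is a positive entry of w
    have key : ∀ w : ι → ℝ, (∀ i, c i = 0 → w i = 0) → (∑ i, w i • v i = 0) →
        (∃ i, 0 < w i) →
        ∃ d : ι → ℝ, (∀ i, 0 ≤ d i) ∧ ∑ i, d i • v i = ∑ i, c i • v i ∧
          LinearIndependent ℝ (fun i : {i // d i ≠ 0} => v i) := by
      intro w hwc hwsum ⟨i₁, hi₁⟩
      set P : Finset ι := Finset.univ.filter (fun i => 0 < w i) with hP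
      have hPne : P.Nonempty := ⟨i₁, by simp [hP, hi₁]⟩
      obtain ⟨i₀, hi₀P, hi₀min⟩ := P.exists_min_image (fun i => c i / w i) hPne
      have hwi₀ : 0 < w i₀ := by simpa [hP] using hi₀P
      set t : ℝ := c i₀ / w i₀ with ht
      have ht0 : 0 ≤ t := div_nonneg (hc i₀) hwi₀.le
      set d : ι → ℝ := fun i => c i - t * w i with hd
      have hd0 : ∀ i, 0 ≤ d i := by
        intro i
        by_cases h : 0 < w i
        · have := hi₀min i (by simp [hP, h])
          have : t * w i ≤ (c i / w i) * w i := by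
            apply mul_le_mul_of_nonneg_right _ h.le
            exact this
          simp only [hd]
          rw [div_mul_cancel₀ _ h.ne'] at this
          linarith
        · push_neg at h
          have : t * w i ≤ 0 := mul_nonpos_of_nonneg_of_nonpos ht0 h
          simp only [hd]
          linarith [hc i]
      have hdsum : ∑ i, d i • v i = ∑ i, c i • v i := by
        simp only [hd, sub_smul, Finset.sum_sub_distrib]
        have h2 : ∑ x : ι, (t * w x) • v x = t • (0 : V) := by
          rw [← hwsum, Finset.smul_sum]
          simp [mul_smul]
        rw [h2, smul_zero, sub_zero]
      have hdsupp : Finset.univ.filter (fun i => d i ≠ 0) ⊂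
          Finset.univ.filter (fun i => c i ≠ 0) := by
        constructor
        · intro i hi
          simp only [Finset.mem_filter, Finset.mem_univ, true_and] at hi ⊢
          intro h
          exact hi (by simp [hd, h, hwc i h])
        · intro hsub
          have hi₀c : c i₀ ≠ 0 := fun h => absurd (hwc i₀ h) hwi₀.ne'
          have hd₀ : d i₀ = 0 := by
            simp only [hd, ht]
            field_simp
            ring
          have hmem := hsub (Finset.mem_filter.mpr ⟨Finset.mem_univ _, hi₀c⟩)
          rw [Finset.mem_filter] at hmem
          exact hmem.2 hd₀
      obtain ⟨d', h1, h2, h3⟩ := ih _ (Finset.card_lt_card hdsupp |>.trans_eq hN) d hd0 rfl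
      exact ⟨d', h1, h2.trans hdsum, h3⟩
    by_cases hpos : ∃ i, 0 < w i
    · exact key w hwc hwsum hpos
    · refine key (-w) (fun i h => by simp [hwc i h]) (by simpa using hwsum) ?_
      push_neg at hpos
      refine ⟨j₀, ?_⟩
      have hne : w j₀ ≠ 0 := by simp [hw, j₀.2, hj₀]
      simp only [Pi.neg_apply]
      exact neg_pos.mpr (lt_of_le_of_ne (hpos j₀) hne)


open InnerProductSpace

variable {κ : Type*} [Fintype κ] {ι : Type*} [Fintype ι]

lemma coneSet_closed (v : ι → EuclideanSpace ℝ κ) :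
    IsClosed {x : EuclideanSpace ℝ κ |
      ∃ c : ι → ℝ, (∀ i, 0 ≤ c i) ∧ ∑ i, c i • v i = x} := by
  classical
  have hset : {x : EuclideanSpace ℝ κ | ∃ c : ι → ℝ, (∀ i, 0 ≤ c i) ∧ ∑ i, c i • v i = x}
      = ⋃ (S : Finset ι) (_ : LinearIndependent ℝ (fun i : S => v i)),
        (fun c : S → ℝ => ∑ j : S, c j • v j) '' {c | ∀ j, 0 ≤ c j} := by
    ext x
    simp only [Set.mem_setOf_eq, Set.mem_iUnion, Set.mem_image]
    constructor
    · rintro ⟨c, hc, rfl⟩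
      obtain ⟨d, hd0, hdsum, hdli⟩ := cone_cara v c hc
      refine ⟨Finset.univ.filter (fun i => d i ≠ 0), ?_, fun j => d j, fun j => hd0 j, ?_⟩
      · let e : {i // i ∈ Finset.univ.filter (fun i => d i ≠ 0)} ≃ {i // d i ≠ 0} :=
          Equiv.subtypeEquivRight (by simp)
        have : (fun i : {i // i ∈ Finset.univ.filter (fun i => d i ≠ 0)} => v i)
            = (fun i : {i // d i ≠ 0} => v i) ∘ e := funext fun i => by simp [Function.comp, e, Equiv.subtypeEquivRight_apply]
        rw [this]
        exact hdli.comp e e.injective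
      · rw [← hdsum]
        rw [← Finset.sum_subtype (Finset.univ.filter (fun i => d i ≠ 0))
          (fun i => Iff.rfl) (fun i => d i • v i)]
        exact Finset.sum_filter_of_ne (fun i _ hne h => hne (by rw [h, zero_smul]))
    · rintro ⟨S, _, c, hc, rfl⟩
      refine ⟨fun i => if h : i ∈ S then c ⟨i, h⟩ else 0, fun i => ?_, ?_⟩
      · dsimp only
        split
        · exact hc _
        · exact le_refl 0
      · rw [(Finset.sum_subset (Finset.subset_univ S) (fun x _ hx => by
          dsimp only; rw [dif_neg hx, zero_smul])).symm]
        rw [Finset.sum_subtype S (fun _ => Iff.rfl) (fun i => (if h : i ∈ S then c ⟨i, h⟩ else 0) • v i)]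
        refine Finset.sum_congr rfl fun j _ => ?_
        rw [dif_pos j.2]
  rw [hset]
  refine isClosed_iUnion_of_finite fun S => isClosed_iUnion_of_finite fun hS => ?_
  have hinj : Function.Injective (fun c : S → ℝ => ∑ j : S, c j • v j) := by
    intro a b hab
    have := Fintype.linearIndependent_iff.mp hS (a - b) (by
      simp only [Pi.sub_apply, sub_smul, Finset.sum_sub_distrib, hab, sub_self])
    funext j
    have := this j
    simpa [sub_eq_zero] using this
  let L : (S → ℝ) →ₗ[ℝ] EuclideanSpace ℝ κ :=
    { toFun := fun c => ∑ j : S, c j • v j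
      map_add' := by intro a b; simp [add_smul, Finset.sum_add_distrib]
      map_smul' := by intro r a; simp [Finset.smul_sum, mul_smul] }
  have hLemb := LinearMap.isClosedEmbedding_of_injective
    (LinearMap.ker_eq_bot (f := L).mpr hinj)
  have horth : IsClosed {c : S → ℝ | ∀ j, 0 ≤ c j} := by
    have : {c : S → ℝ | ∀ j, 0 ≤ c j} = ⋂ j, {c | 0 ≤ c j} := by ext; simp [Set.mem_iInter]
    rw [this]
    exact isClosed_iInter fun j => isClosed_le continuous_const (continuous_apply j)
  exact hLemb.isClosedMap _ horth

lemma farkas_cone (v : ι → EuclideanSpace ℝ κ) (b : EuclideanSpace ℝ κ)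
    (h : ∀ y : EuclideanSpace ℝ κ, (∀ i, 0 ≤ ⟪v i, y⟫_ℝ) → 0 ≤ ⟪b, y⟫_ℝ) :
    ∃ c : ι → ℝ, (∀ i, 0 ≤ c i) ∧ ∑ i, c i • v i = b := by
  classical
  by_contra hcon
  push_neg at hcon
  set K : ConvexCone ℝ (EuclideanSpace ℝ κ) :=
    { carrier := {x | ∃ c : ι → ℝ, (∀ i, 0 ≤ c i) ∧ ∑ i, c i • v i = x}
      smul_mem' := by
        rintro r hr x ⟨c, hc, rfl⟩
        exact ⟨fun i => r * c i, fun i => mul_nonneg hr.le (hc i), by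
          rw [Finset.smul_sum]; simp [mul_smul]⟩
      add_mem' := by
        rintro x ⟨c, hc, rfl⟩ y ⟨c', hc', rfl⟩
        exact ⟨fun i => c i + c' i, fun i => add_nonneg (hc i) (hc' i), by
          simp [add_smul, Finset.sum_add_distrib]⟩ } with hK
  have hb : b ∉ K := by
    intro ⟨c, hc, hcs⟩
    exact absurd hcs (hcon c hc)
  obtain ⟨y, hy1, hy2⟩ : ∃ y, (∀ x ∈ K, 0 ≤ ⟪x, y⟫_ℝ) ∧ ⟪y, b⟫_ℝ < 0 := by
    obtain ⟨y, hy1, hy2⟩ := ProperCone.hyperplane_separation' (E := EuclideanSpace ℝ κ)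
      (ClosedSubmodule.mk (K.toPointedCone ⟨fun _ => 0, fun _ => le_refl 0, by simp⟩)
        (coneSet_closed v)) hb
    exact ⟨y, fun x hx => hy1 x hx, by rw [real_inner_comm]; exact hy2⟩
  have hvy : ∀ i, 0 ≤ ⟪v i, y⟫_ℝ := by
    intro i
    refine hy1 (v i) ⟨fun j => if j = i then 1 else 0, fun j => by positivity, ?_⟩
    simp [ite_smul]
  have := h y hvy
  rw [real_inner_comm] at this
  linarith

lemma farkas_dot (v : ι → (κ → ℝ)) (b : κ → ℝ)
    (h : ∀ y : κ → ℝ, (∀ i, 0 ≤ v i ⬝ᵥ y) → 0 ≤ b ⬝ᵥ y) :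
    ∃ c : ι → ℝ, (∀ i, 0 ≤ c i) ∧ ∀ j, ∑ i, c i * v i j = b j := by
  have inner_eq : ∀ x y : EuclideanSpace ℝ κ, ⟪x, y⟫_ℝ = ∑ j, x j * y j := by
    intro x y
    simp [PiLp.inner_apply, RCLike.inner_apply, starRingEnd_apply]
    exact Finset.sum_congr rfl fun _ _ => mul_comm _ _
  obtain ⟨c, hc, hsum⟩ := farkas_cone (κ := κ) (fun i => WithLp.toLp 2 (v i))
    (WithLp.toLp 2 b) (by
      intro y hy
      have := h y.ofLp (fun i => by simpa [inner_eq, dotProduct] using hy i)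
      simpa [inner_eq, dotProduct] using this)
  refine ⟨c, hc, fun j => ?_⟩
  have h2 := congrArg (fun z : EuclideanSpace ℝ κ => z j) hsum
  simpa using h2

lemma farkas_ineq {ρ σ : Type*} [Fintype ρ] [Fintype σ]
    (A : Matrix ρ σ ℝ) (b : ρ → ℝ)
    (h : ∀ y : ρ → ℝ, (∀ i, 0 ≤ y i) → Aᵀ.mulVec y = 0 → 0 ≤ b ⬝ᵥ y) :
    ∃ x : σ → ℝ, ∀ i, A.mulVec x i ≤ b i := by
  classical
  set v : (σ ⊕ σ ⊕ ρ) → (ρ → ℝ) := fun k => match k with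
    | Sum.inl j => fun i => A i j
    | Sum.inr (Sum.inl j) => fun i => -A i j
    | Sum.inr (Sum.inr i₀) => fun i => if i = i₀ then 1 else 0 with hv
  obtain ⟨c, hc, hsum⟩ := farkas_dot v b (by
    intro y hy
    have hynn : ∀ i, 0 ≤ y i := by
      intro i
      have := hy (Sum.inr (Sum.inr i))
      simpa [hv, dotProduct] using this
    have hAy : Aᵀ.mulVec y = 0 := by
      funext j
      have h1 := hy (Sum.inl j)
      have h2 := hy (Sum.inr (Sum.inl j))
      simp only [hv, dotProduct] at h1 h2
      have : Aᵀ.mulVec y j = ∑ i, A i j * y i := by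
        simp [Matrix.mulVec, Matrix.transpose_apply, dotProduct, mul_comm]
      rw [Pi.zero_apply, this]
      simp only [neg_mul, Finset.sum_neg_distrib] at h2
      linarith
    exact h y hynn hAy)
  refine ⟨fun j => c (Sum.inl j) - c (Sum.inr (Sum.inl j)), fun i => ?_⟩
  have hs := hsum i
  rw [Fintype.sum_sum_type, Fintype.sum_sum_type] at hs
  have h3 : ∑ i₀, c (Sum.inr (Sum.inr i₀)) * v (Sum.inr (Sum.inr i₀)) i
      = c (Sum.inr (Sum.inr i)) := by
    simp [hv]
  have hA : A.mulVec (fun j => c (Sum.inl j) - c (Sum.inr (Sum.inl j))) i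
      = ∑ j, c (Sum.inl j) * A i j - ∑ j, c (Sum.inr (Sum.inl j)) * A i j := by
    rw [← Finset.sum_sub_distrib]
    simp only [Matrix.mulVec, dotProduct]
    exact Finset.sum_congr rfl fun j _ => by ring
  rw [hA]
  simp only [hv] at hs h3
  rw [h3] at hs
  have := hc (Sum.inr (Sum.inr i))
  simp only [mul_neg] at hs
  rw [Finset.sum_neg_distrib] at hs
  linarith

lemma lp_dual {m n : ℕ} (E : Matrix (Fin m) (Fin n) ℝ) (e : Fin m → ℝ) (c ΦA : Fin n → ℝ)
    (hfeas : E.mulVec ΦA = e) (hpos : ∀ i, 0 ≤ ΦA i)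
    (hopt : ∀ Φ : Fin n → ℝ, E.mulVec Φ = e → (∀ i, 0 ≤ Φ i) → Φ ⬝ᵥ c ≤ ΦA ⬝ᵥ c) :
    ∃ p : Fin m → ℝ, (∀ j, c j ≤ Eᵀ.mulVec p j) ∧ ΦA ⬝ᵥ (-c + Eᵀ.mulVec p) = 0 := by
  classical
  set v : ℝ := ΦA ⬝ᵥ c with hv
  set A : Matrix (Fin n ⊕ Unit) (Fin m) ℝ := Matrix.of fun k i => match k with
    | Sum.inl j => -(E i j)
    | Sum.inr _ => e i with hA
  set b : (Fin n ⊕ Unit) → ℝ := fun k => match k with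
    | Sum.inl j => -(c j)
    | Sum.inr _ => v with hb
  obtain ⟨p, hp⟩ := farkas_ineq A b (by
    intro y hy hAy
    set Φ : Fin n → ℝ := fun j => y (Sum.inl j) with hΦ
    set t : ℝ := y (Sum.inr ()) with hT
    have ht0 : 0 ≤ t := hy _
    have hEΦ : E.mulVec Φ = t • e := by
      funext i
      have := congrFun hAy i
      simp only [Matrix.mulVec, Matrix.transpose_apply, dotProduct, Fintype.sum_sum_type,
        hA, Matrix.of_apply, Pi.zero_apply] at this
      simp only [Matrix.mulVec, dotProduct, Pi.smul_apply, smul_eq_mul]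
      have hsum : ∑ j, -(E i j) * Φ j + t * e i = 0 := by
        simpa [mul_comm] using this
      have : ∑ j, -(E i j) * Φ j = -∑ j, E i j * Φ j := by
        rw [← Finset.sum_neg_distrib]
        exact Finset.sum_congr rfl fun j _ => by ring
      rw [this] at hsum
      linarith
    have hkey : Φ ⬝ᵥ c ≤ t * v := by
      rcases eq_or_lt_of_le ht0 with h0 | h0
      · have hE0 : E.mulVec Φ = 0 := by rw [hEΦ, ← h0, zero_smul]
        have := hopt (ΦA + Φ) (by rw [Matrix.mulVec_add, hfeas, hE0, add_zero])
          (fun i => add_nonneg (hpos i) (hy _))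
        rw [add_dotProduct] at this
        rw [← h0, zero_mul]
        linarith
      · have := hopt (t⁻¹ • Φ) (by
          rw [Matrix.mulVec_smul, hEΦ, smul_smul, inv_mul_cancel₀ h0.ne', one_smul])
          (fun i => mul_nonneg (inv_nonneg.mpr ht0) (hy _))
        rw [smul_dotProduct, smul_eq_mul] at this
        calc Φ ⬝ᵥ c = t * (t⁻¹ * (Φ ⬝ᵥ c)) := by field_simp
        _ ≤ t * v := by apply mul_le_mul_of_nonneg_left this ht0
    show 0 ≤ b ⬝ᵥ y
    simp only [dotProduct, Fintype.sum_sum_type, hb] at *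
    have h1 : ∑ j, -(c j) * Φ j = -∑ j, Φ j * c j := by
      rw [← Finset.sum_neg_distrib]
      exact Finset.sum_congr rfl fun j _ => by ring
    have h2 : (∑ x : Unit, v * y (Sum.inr x)) = v * t := by simp [hT]
    rw [h1, h2]
    linarith [mul_comm v t])
  have hin : ∀ j, c j ≤ Eᵀ.mulVec p j := by
    intro j
    have := hp (Sum.inl j)
    simp only [Matrix.mulVec, dotProduct, hA, Matrix.of_apply, hb] at this
    simp only [Matrix.mulVec, Matrix.transpose_apply, dotProduct]
    have hneg : ∑ i, -(E i j) * p i = -∑ i, E i j * p i := by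
      rw [← Finset.sum_neg_distrib]
      exact Finset.sum_congr rfl fun i _ => by ring
    rw [hneg] at this
    linarith
  have hval : e ⬝ᵥ p ≤ v := by
    have := hp (Sum.inr ())
    simpa only [Matrix.mulVec, dotProduct, hA, Matrix.of_apply, hb] using this
  refine ⟨p, hin, le_antisymm ?_ ?_⟩
  · have heq : ΦA ⬝ᵥ Eᵀ.mulVec p = e ⬝ᵥ p := by
      rw [Matrix.dotProduct_mulVec, Matrix.vecMul_transpose, hfeas]
    rw [dotProduct_add, dotProduct_neg, heq]
    linarith
  · simp only [dotProduct, Pi.add_apply, Pi.neg_apply]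
    exact Finset.sum_nonneg fun i _ => mul_nonneg (hpos i) (by
      have := hin i
      linarith)

lemma best_response {m n : ℕ} (E : Matrix (Fin m) (Fin n) ℝ) (e : Fin m → ℝ) (c ΦA : Fin n → ℝ)
    (p : Fin m → ℝ) (hfeas : E.mulVec ΦA = e)
    (hdual : ∀ j, c j ≤ Eᵀ.mulVec p j)
    (hcs : ΦA ⬝ᵥ (-c + Eᵀ.mulVec p) = 0)
    (Φ : Fin n → ℝ) (hΦ : E.mulVec Φ = e) (hΦ0 : ∀ i, 0 ≤ Φ i) :
    Φ ⬝ᵥ c ≤ ΦA ⬝ᵥ c := by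
  have h1 : Φ ⬝ᵥ c ≤ Φ ⬝ᵥ Eᵀ.mulVec p := by
    simp only [dotProduct]
    exact Finset.sum_le_sum fun i _ => mul_le_mul_of_nonneg_left (hdual i) (hΦ0 i)
  have h2 : Φ ⬝ᵥ Eᵀ.mulVec p = e ⬝ᵥ p := by
    rw [Matrix.dotProduct_mulVec, Matrix.vecMul_transpose, hΦ]
  have h3 : ΦA ⬝ᵥ Eᵀ.mulVec p = e ⬝ᵥ p := by
    rw [Matrix.dotProduct_mulVec, Matrix.vecMul_transpose, hfeas]
  rw [dotProduct_add, dotProduct_neg] at hcs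
  linarith


/-- A pair of realization plans `(ΦA, ΦD)` is a Nash equilibrium of the
sequence-form game (each is feasible and a best response to the other) if and only
if there exist vectors `p, q` such that `Eᵀp ≥ Π_A ΦD`, `Fᵀq ≥ Π_Dᵀ ΦA`,
`ΦAᵀ(−Π_A ΦD + Eᵀp) = 0`, `ΦDᵀ(−Π_Dᵀ ΦA + Fᵀq) = 0`, `E ΦA = e`, `F ΦD = f`,
`ΦA ≥ 0`, `ΦD ≥ 0`. -/
theorem stmt_10 {mA nA mD nD : ℕ}
    (E : Matrix (Fin mA) (Fin nA) ℝ) (e : Fin mA → ℝ)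
    (F : Matrix (Fin mD) (Fin nD) ℝ) (f : Fin mD → ℝ)
    (PayA PayD : Matrix (Fin nA) (Fin nD) ℝ)
    (ΦA : Fin nA → ℝ) (ΦD : Fin nD → ℝ) :
    ((E.mulVec ΦA = e ∧ (∀ i, 0 ≤ ΦA i)) ∧
     (F.mulVec ΦD = f ∧ (∀ j, 0 ≤ ΦD j)) ∧
     (∀ Φ : Fin nA → ℝ, E.mulVec Φ = e → (∀ i, 0 ≤ Φ i) →
        Φ ⬝ᵥ PayA.mulVec ΦD ≤ ΦA ⬝ᵥ PayA.mulVec ΦD) ∧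
     (∀ Ψ : Fin nD → ℝ, F.mulVec Ψ = f → (∀ j, 0 ≤ Ψ j) →
        Ψ ⬝ᵥ PayDᵀ.mulVec ΦA ≤ ΦD ⬝ᵥ PayDᵀ.mulVec ΦA))
    ↔ ∃ (p : Fin mA → ℝ) (q : Fin mD → ℝ),
        (∀ j, PayA.mulVec ΦD j ≤ Eᵀ.mulVec p j) ∧
        (∀ j, PayDᵀ.mulVec ΦA j ≤ Fᵀ.mulVec q j) ∧
        ΦA ⬝ᵥ (-(PayA.mulVec ΦD) + Eᵀ.mulVec p) = 0 ∧
        ΦD ⬝ᵥ (-(PayDᵀ.mulVec ΦA) + Fᵀ.mulVec q) = 0 ∧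
        E.mulVec ΦA = e ∧ F.mulVec ΦD = f ∧
        (∀ i, 0 ≤ ΦA i) ∧ (∀ j, 0 ≤ ΦD j) := by
  constructor
  · rintro ⟨⟨hEA, hA0⟩, ⟨hFD, hD0⟩, hoptA, hoptD⟩
    obtain ⟨p, hp1, hp2⟩ := lp_dual E e (PayA.mulVec ΦD) ΦA hEA hA0 hoptA
    obtain ⟨q, hq1, hq2⟩ := lp_dual F f (PayDᵀ.mulVec ΦA) ΦD hFD hD0 hoptD
    exact ⟨p, q, hp1, hq1, hp2, hq2, hEA, hFD, hA0, hD0⟩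
  · rintro ⟨p, q, hp1, hq1, hp2, hq2, hEA, hFD, hA0, hD0⟩
    refine ⟨⟨hEA, hA0⟩, ⟨hFD, hD0⟩, ?_, ?_⟩
    · exact fun Φ hΦ hΦ0 => best_response E e (PayA.mulVec ΦD) ΦA p hEA hp1 hp2 Φ hΦ hΦ0
    · exact fun Ψ hΨ hΨ0 => best_response F f (PayDᵀ.mulVec ΦA) ΦD q hFD hq1 hq2 Ψ hΨ hΨ0
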